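/- The projection of a sequence of valid firings of the trace workflow W^τ is a sequence of valid firings of the original workflow W: if C is a sequence of valid firings in W^τ starting from a state whose marking restricted to the original places puts a token only in start, then Π_τ(C), obtained by restricting all markings to the original places P and mapping each injected transition t_{e_i} back to the original transition t_i, is a sequence of valid firings in W. -/
import Mathlib


/-- A DAW-net. -/
structure DAWNet (P T V O : Type) where
  pre : T → Set P
  post : T → Set P
  wr : T → V → Option (Set O)
  gd : T → ((V → Option O) → Prop)

/-- Valid firing of a transition `t` from state `(M, η)` to state `(M', η')`. -/
def ValidFiring {P T V O : Type} (W : DAWNet P T V O)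
    (M : P → ℕ) (η : V → Option O) (t : T) (M' : P → ℕ) (η' : V → Option O) : Prop :=
  (∀ p ∈ W.pre t, 0 < M p) ∧
  W.gd t η ∧
  (∀ p, (p ∈ W.pre t ∧ p ∉ W.post t → M' p = M p - 1) ∧
        (p ∈ W.post t ∧ p ∉ W.pre t → M' p = M p + 1) ∧
        ((p ∈ W.pre t ↔ p ∈ W.post t) → M' p = M p)) ∧
  (∀ v (s : Set O), W.wr t v = some s →
      (s = ∅ → η' v = none) ∧ (s.Nonempty → ∃ o ∈ s, η' v = some o)) ∧
  (∀ v, W.wr t v = none → η' v = η v)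

/-- `FiringSeq W s l e` : `l` lists the successive (transition, reached state) steps of a
sequence of valid firings of `W` from state `s` to state `e`. -/
inductive FiringSeq {P T V O : Type} (W : DAWNet P T V O) :
    ((P → ℕ) × (V → Option O)) → List (T × (P → ℕ) × (V → Option O)) →
    ((P → ℕ) × (V → Option O)) → Prop
  | nil (s : (P → ℕ) × (V → Option O)) : FiringSeq W s [] s
  | cons {s : (P → ℕ) × (V → Option O)} {t : T} {M' : P → ℕ} {η' : V → Option O}
      {l : List (T × (P → ℕ) × (V → Option O))} {e : (P → ℕ) × (V → Option O)} :
      ValidFiring W s.1 s.2 t M' η' → FiringSeq W (M', η') l e →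
      FiringSeq W s ((t, M', η') :: l) e

/-- Restriction of a marking of the trace workflow to the original places. -/
def projM {P : Type} {n : ℕ} (M : (P ⊕ Fin (n+1)) → ℕ) : P → ℕ := fun p => M (Sum.inl p)

/-- Projection of a step of the trace workflow: injected transitions `t_{e_i}` are mapped
back to the original transitions, markings are restricted to the original places. -/
def projStep {P T V O : Type} {n : ℕ} (tr : Fin n → T) :
    ((T ⊕ Fin n) × ((P ⊕ Fin (n+1)) → ℕ) × (V → Option O)) →
      (T × (P → ℕ) × (V → Option O)) :=
  fun x => (Sum.elim id tr x.1, projM x.2.1, x.2.2)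

/-- The projection of a sequence of valid firings of the trace workflow `W^τ`
(starting from a state whose marking, restricted to the original places, puts a token
only in `start`) is a sequence of valid firings of the original workflow `W`.
Here `Wτ` is the trace workflow for a trace with `n` events whose transitions are
`tr 0, …, tr (n-1)`: it has fresh places `p_{e_0}, …, p_{e_n}` (indexed by `Fin (n+1)`)
and fresh transitions `t_{e_1}, …, t_{e_n}` (indexed by `Fin n`, `Sum.inr i` standing
for `t_{e_{i+1}}`), mirroring `W` as described by the hypotheses. -/
theorem trace_workflow_projection {P T V O : Type} {n : ℕ}
    (W : DAWNet P T V O) (Wτ : DAWNet (P ⊕ Fin (n+1)) (T ⊕ Fin n) V O)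
    (tr : Fin n → T) (start : P)
    (hpreT : ∀ t : T, Wτ.pre (Sum.inl t) = Sum.inl '' W.pre t)
    (hpostT : ∀ t : T, Wτ.post (Sum.inl t) = Sum.inl '' W.post t)
    (hwrT : ∀ t : T, Wτ.wr (Sum.inl t) = W.wr t)
    (hgdT : ∀ (t : T) (η : V → Option O), Wτ.gd (Sum.inl t) η ↔ W.gd t η)
    (hpreE : ∀ i : Fin n,
      Wτ.pre (Sum.inr i) = Sum.inl '' W.pre (tr i) ∪ {Sum.inr i.castSucc})
    (hpostE : ∀ i : Fin n,
      Wτ.post (Sum.inr i) = Sum.inl '' W.post (tr i) ∪ {Sum.inr i.succ})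
    (hgdE : ∀ (i : Fin n) (η : V → Option O), Wτ.gd (Sum.inr i) η → W.gd (tr i) η)
    (hwrE : ∀ (i : Fin n) (v : V),
      (Wτ.wr (Sum.inr i) v = none ↔ W.wr (tr i) v = none) ∧
      (∀ s s' : Set O, Wτ.wr (Sum.inr i) v = some s → W.wr (tr i) v = some s' →
        s ⊆ s' ∧ (s = ∅ ↔ s' = ∅)))
    (M0 : (P ⊕ Fin (n+1)) → ℕ) (η0 : V → Option O)
    (hstart : M0 (Sum.inl start) = 1)
    (hrest : ∀ p : P, p ≠ start → M0 (Sum.inl p) = 0)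
    (l : List ((T ⊕ Fin n) × ((P ⊕ Fin (n+1)) → ℕ) × (V → Option O)))
    (e : ((P ⊕ Fin (n+1)) → ℕ) × (V → Option O))
    (h : FiringSeq Wτ (M0, η0) l e) :
    FiringSeq W (projM M0, η0) (l.map (projStep tr)) (projM e.1, e.2) := by
  have step : ∀ (M : (P ⊕ Fin (n+1)) → ℕ) (η : V → Option O) (t : T ⊕ Fin n)
      (M' : (P ⊕ Fin (n+1)) → ℕ) (η' : V → Option O), ValidFiring Wτ M η t M' η' →
      ValidFiring W (projM M) η (Sum.elim id tr t) (projM M') η' := by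
    rintro M η t M' η' ⟨h1, h2, h3, h4, h5⟩
    cases t with
    | inl t =>
      refine ⟨?_, (hgdT t η).mp h2, ?_, ?_, ?_⟩
      · intro p hp
        exact h1 _ (by rw [hpreT]; exact Set.mem_image_of_mem _ hp)
      · intro p
        have := h3 (Sum.inl p)
        simp only [hpreT, hpostT, Set.mem_image, Sum.inl.injEq,
          exists_eq_right] at this
        exact this
      · intro v s hv
        exact h4 v s (by rw [hwrT]; exact hv)
      · intro v hv
        exact h5 v (by rw [hwrT]; exact hv)
    | inr i =>
      refine ⟨?_, hgdE i η h2, ?_, ?_, ?_⟩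
      · intro p hp
        exact h1 _ (by rw [hpreE]; exact Or.inl (Set.mem_image_of_mem _ hp))
      · intro p
        have := h3 (Sum.inl p)
        simp only [hpreE, hpostE, Set.mem_union, Set.mem_image, Sum.inl.injEq,
          exists_eq_right, Set.mem_singleton_iff, reduceCtorEq, or_false] at this
        exact this
      · intro v s' hv
        simp only [Sum.elim_inr] at hv
        rcases hw : Wτ.wr (Sum.inr i) v with _ | s
        · rw [((hwrE i v).1).mp hw] at hv; simp at hv
        · obtain ⟨hsub, hempty⟩ := (hwrE i v).2 s s' hw hv
          obtain ⟨c1, c2⟩ := h4 v s hw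
          refine ⟨fun h => c1 (hempty.mpr h), fun h => ?_⟩
          have hs : s.Nonempty := by
            rw [Set.nonempty_iff_ne_empty]
            intro hc
            exact (Set.nonempty_iff_ne_empty.mp h) (hempty.mp hc)
          obtain ⟨o, ho, heq⟩ := c2 hs
          exact ⟨o, hsub ho, heq⟩
      · intro v hv
        simp only [Sum.elim_inr] at hv
        exact h5 v (((hwrE i v).1).mpr hv)
  suffices H : ∀ (s : ((P ⊕ Fin (n+1)) → ℕ) × (V → Option O))
      (l : List ((T ⊕ Fin n) × ((P ⊕ Fin (n+1)) → ℕ) × (V → Option O)))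
      (e : ((P ⊕ Fin (n+1)) → ℕ) × (V → Option O)), FiringSeq Wτ s l e →
      FiringSeq W (projM s.1, s.2) (l.map (projStep tr)) (projM e.1, e.2) by
    exact H _ _ _ h
  intro s l e hse
  induction hse with
  | nil s => exact FiringSeq.nil _
  | cons hf _ ih => exact FiringSeq.cons (step _ _ _ _ _ hf) ih
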